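/- Let n ≥ m ≥ k ≥ 1 and let A be an m × n matrix with entries in {0,1}. Then ‖A‖_{F_k} ≤ (1 + √k)√(mn)/2. -/

import Mathlib

open Finset

/-- Singular values (unsorted) of a complex matrix: square roots of eigenvalues of `A * Aᴴ`. -/
noncomputable def svalC {m n : ℕ} (A : Matrix (Fin m) (Fin n) ℂ) : Fin m → ℝ :=
  fun i => Real.sqrt ((Matrix.isHermitian_mul_conjTranspose_self A).eigenvalues i)

/-- Singular values of a complex matrix sorted in decreasing order. -/
noncomputable def svalCSorted {m n : ℕ} (A : Matrix (Fin m) (Fin n) ℂ) : Fin m → ℝ :=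
  svalC A ∘ ⇑(Tuple.sort (fun i => -(svalC A i)))

/-- Singular values (unsorted) of a real matrix. -/
noncomputable def svalR {m n : ℕ} (A : Matrix (Fin m) (Fin n) ℝ) : Fin m → ℝ :=
  fun i => Real.sqrt ((Matrix.isHermitian_mul_conjTranspose_self A).eigenvalues i)

/-- Singular values of a real matrix sorted in decreasing order. -/
noncomputable def svalRSorted {m n : ℕ} (A : Matrix (Fin m) (Fin n) ℝ) : Fin m → ℝ :=
  svalR A ∘ ⇑(Tuple.sort (fun i => -(svalR A i)))

/-- Ky Fan `k`-norm of a complex matrix: the sum of its `k` largest singular values. -/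
noncomputable def kyFanC {m n : ℕ} (A : Matrix (Fin m) (Fin n) ℂ) (k : ℕ) : ℝ :=
  ∑ i : Fin m, if (i : ℕ) < k then svalCSorted A i else 0

/-- Ky Fan `k`-norm of a real matrix. -/
noncomputable def kyFanR {m n : ℕ} (A : Matrix (Fin m) (Fin n) ℝ) (k : ℕ) : ℝ :=
  ∑ i : Fin m, if (i : ℕ) < k then svalRSorted A i else 0

/-- The adjacency matrix of a simple graph is Hermitian (over `ℝ`). -/
lemma adjHerm {n : ℕ} (G : SimpleGraph (Fin n)) [DecidableRel G.Adj] :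
    (G.adjMatrix ℝ).IsHermitian := by
  have h := G.isSymm_adjMatrix (α := ℝ)
  simpa [Matrix.IsHermitian, Matrix.conjTranspose_eq_transpose_of_trivial, Matrix.IsSymm] using h

/-- Singular values of a graph (unsorted). -/
noncomputable def gsval {n : ℕ} (G : SimpleGraph (Fin n)) [DecidableRel G.Adj] : Fin n → ℝ :=
  svalR (G.adjMatrix ℝ)

/-- Singular values of a graph sorted in decreasing order. -/
noncomputable def gsvalSorted {n : ℕ} (G : SimpleGraph (Fin n)) [DecidableRel G.Adj] : Fin n → ℝ :=
  svalRSorted (G.adjMatrix ℝ)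

/-- Eigenvalues of a graph sorted in decreasing order: `geigSorted G 0 = μ₁ ≥ ⋯ ≥ μₙ`. -/
noncomputable def geigSorted {n : ℕ} (G : SimpleGraph (Fin n)) [DecidableRel G.Adj] : Fin n → ℝ :=
  (adjHerm G).eigenvalues ∘ ⇑(Tuple.sort (fun i => -((adjHerm G).eigenvalues i)))

/-- Ky Fan `k`-norm of a graph. -/
noncomputable def kyFanG {n : ℕ} (G : SimpleGraph (Fin n)) [DecidableRel G.Adj] (k : ℕ) : ℝ :=
  kyFanR (G.adjMatrix ℝ) k

open Matrix

lemma trace_eq_sum_eig {p : ℕ} {M : Matrix (Fin p) (Fin p) ℝ} (hM : M.IsHermitian) :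
    M.trace = ∑ i, hM.eigenvalues i := by
  nth_rewrite 1 [hM.spectral_theorem]
  rw [Unitary.conjStarAlgAut_apply]
  rw [Matrix.trace_mul_comm, ← mul_assoc,
    (Matrix.mem_unitaryGroup_iff').mp (hM.eigenvectorUnitary).2, one_mul]
  simp [Matrix.trace_diagonal]

lemma rayleigh {p : ℕ} {M : Matrix (Fin p) (Fin p) ℝ} (hM : M.IsHermitian)
    (x : Fin p → ℝ) {c : ℝ} (hc : ∀ i, hM.eigenvalues i ≤ c) :
    x ⬝ᵥ (M *ᵥ x) ≤ c * (x ⬝ᵥ x) := by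
  set U : Matrix (Fin p) (Fin p) ℝ := (hM.eigenvectorUnitary : Matrix (Fin p) (Fin p) ℝ) with hU
  have hUU : U * star U = 1 := (Matrix.mem_unitaryGroup_iff).mp (hM.eigenvectorUnitary).2
  set y : Fin p → ℝ := star U *ᵥ x with hy
  have hstar : star U = Uᵀ := by
    ext i j; simp [Matrix.star_apply]
  have hxU : x ᵥ* U = y := by
    rw [hy, hstar, Matrix.mulVec_transpose]
  have hyy : y ⬝ᵥ y = x ⬝ᵥ x := by
    calc y ⬝ᵥ y = (x ᵥ* U) ⬝ᵥ (star U *ᵥ x) := by rw [hxU, hy]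
    _ = x ⬝ᵥ (U *ᵥ (star U *ᵥ x)) := (Matrix.dotProduct_mulVec x U _).symm
    _ = x ⬝ᵥ ((U * star U) *ᵥ x) := by rw [Matrix.mulVec_mulVec]
    _ = x ⬝ᵥ x := by rw [hUU, Matrix.one_mulVec]
  have hMx : x ⬝ᵥ (M *ᵥ x) = ∑ i, hM.eigenvalues i * (y i * y i) := by
    nth_rewrite 1 [hM.spectral_theorem]
    rw [Unitary.conjStarAlgAut_apply]
    rw [← hU, ← Matrix.mulVec_mulVec, ← Matrix.mulVec_mulVec, ← hy,
      Matrix.dotProduct_mulVec x U, hxU]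
    simp [dotProduct, Matrix.mulVec_diagonal]
    exact Finset.sum_congr rfl fun i _ => by ring
  rw [hMx, ← hyy]
  have : (c : ℝ) * (y ⬝ᵥ y) = ∑ i, c * (y i * y i) := by
    simp [dotProduct, Finset.mul_sum]
  rw [this]
  exact Finset.sum_le_sum fun i _ => mul_le_mul_of_nonneg_right (hc i) (mul_self_nonneg _)

set_option maxHeartbeats 1000000 in
/-- Ky Fan norm of a `(0,1)`-matrix: `‖A‖_{F_k} ≤ (1 + √k)√(mn)/2`. -/
theorem kyFan_le_zero_one {m n k : ℕ} (hk : 1 ≤ k) (hkm : k ≤ m) (hmn : m ≤ n)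
    (A : Matrix (Fin m) (Fin n) ℝ) (h01 : ∀ i j, A i j = 0 ∨ A i j = 1) :
    kyFanR A k ≤ (1 + Real.sqrt k) * Real.sqrt ((m : ℝ) * n) / 2 := by
  have hm : 0 < m := lt_of_lt_of_le hk hkm
  have hM : (A * Aᴴ).IsHermitian := Matrix.isHermitian_mul_conjTranspose_self A
  set eig : Fin m → ℝ := hM.eigenvalues with heig
  have heig_nonneg : ∀ i, 0 ≤ eig i := fun i =>
    (Matrix.posSemidef_self_mul_conjTranspose A).eigenvalues_nonneg i
  set s : ℝ := ∑ i, ∑ j, A i j with hs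
  have hA01 : ∀ i j, A i j * A i j = A i j := by
    intro i j; rcases h01 i j with h | h <;> rw [h] <;> ring
  have hA0 : ∀ i j, 0 ≤ A i j := by
    intro i j; rcases h01 i j with h | h <;> rw [h] <;> norm_num
  have hA1 : ∀ i j, A i j ≤ 1 := by
    intro i j; rcases h01 i j with h | h <;> rw [h] <;> norm_num
  have hs0 : 0 ≤ s := Finset.sum_nonneg fun i _ => Finset.sum_nonneg fun j _ => hA0 i j
  have hsmn : s ≤ (m : ℝ) * n := by
    calc s ≤ ∑ _i : Fin m, ∑ _j : Fin n, (1:ℝ) :=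
      Finset.sum_le_sum fun i _ => Finset.sum_le_sum fun j _ => hA1 i j
    _ = (m : ℝ) * n := by simp [mul_comm]
  -- trace
  have htr : ∑ i, eig i = s := by
    rw [← trace_eq_sum_eig hM, Matrix.trace]
    simp only [Matrix.diag_apply, Matrix.mul_apply, Matrix.conjTranspose_apply, star_trivial]
    exact Finset.sum_congr rfl fun i _ => Finset.sum_congr rfl fun j _ => hA01 i j
  -- sorted values
  set e : Equiv.Perm (Fin m) := Tuple.sort (fun i => -(svalR A i)) with he
  have hsortdef : ∀ i, svalRSorted A i = svalR A (e i) := fun i => rfl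
  have hsval : ∀ i, svalR A i = Real.sqrt (eig i) := fun i => rfl
  have hanti : ∀ i j : Fin m, i ≤ j → svalRSorted A j ≤ svalRSorted A i := by
    intro i j hij
    have := Tuple.monotone_sort (fun i => -(svalR A i)) hij
    simp only [Function.comp_apply, neg_le_neg_iff] at this
    simpa [hsortdef] using this
  have hnn : ∀ i, 0 ≤ svalRSorted A i := fun i => Real.sqrt_nonneg _
  have hsq : ∀ i, svalRSorted A i ^ 2 = eig (e i) := fun i => by
    rw [hsortdef, hsval, Real.sq_sqrt (heig_nonneg _)]
  have hsumsq : ∑ i, svalRSorted A i ^ 2 = s := by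
    rw [← htr]
    calc ∑ i, svalRSorted A i ^ 2 = ∑ i, eig (e i) := Finset.sum_congr rfl fun i _ => hsq i
    _ = ∑ i, eig i := Equiv.sum_comp e eig
  set i0 : Fin m := ⟨0, hm⟩ with hi0
  set x : ℝ := svalRSorted A i0 with hx
  have hx0 : 0 ≤ x := hnn i0
  have hxge : ∀ i, svalRSorted A i ≤ x := fun i => hanti i0 i (by rw [Fin.le_def]; exact Nat.zero_le _)
  have hx2ge : ∀ j, eig j ≤ x ^ 2 := by
    intro j
    have hj : eig j = svalRSorted A (e.symm j) ^ 2 := by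
      rw [hsq (e.symm j), e.apply_symm_apply]
    rw [hj]
    have h1 : svalRSorted A (e.symm j) ≤ x := hxge _
    nlinarith [hnn (e.symm j)]
  have hx2s : x ^ 2 ≤ s := by
    calc x ^ 2 = eig (e i0) := hsq i0
    _ ≤ ∑ i, eig i := Finset.single_le_sum (fun i _ => heig_nonneg i) (Finset.mem_univ _)
    _ = s := htr
  -- Rayleigh with all-ones
  have hray : s ^ 2 ≤ x ^ 2 * m * n := by
    have h1 : (fun _ => (1:ℝ)) ⬝ᵥ ((A * Aᴴ) *ᵥ fun _ => (1:ℝ)) = ∑ j, (∑ i, A i j) ^ 2 := by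
      simp only [dotProduct, Matrix.mulVec, dotProduct, Matrix.mul_apply,
        Matrix.conjTranspose_apply, star_trivial, mul_one, one_mul]
      have step : ∀ i : Fin m, (∑ i2 : Fin m, ∑ j, A i j * A i2 j)
          = ∑ j, A i j * (∑ i2 : Fin m, A i2 j) := by
        intro i
        rw [Finset.sum_comm]
        exact Finset.sum_congr rfl fun j _ => by rw [← Finset.mul_sum]
      calc ∑ i : Fin m, ∑ i2 : Fin m, ∑ j, A i j * A i2 j
          = ∑ i : Fin m, ∑ j, A i j * (∑ i2 : Fin m, A i2 j) :=
            Finset.sum_congr rfl fun i _ => step i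
        _ = ∑ j, ∑ i : Fin m, A i j * (∑ i2 : Fin m, A i2 j) := Finset.sum_comm
        _ = ∑ j, (∑ i : Fin m, A i j) * (∑ i2 : Fin m, A i2 j) := by
            exact Finset.sum_congr rfl fun j _ => by rw [← Finset.sum_mul]
        _ = ∑ j, (∑ i, A i j) ^ 2 := by
            exact Finset.sum_congr rfl fun j _ => (sq (∑ i, A i j)).symm
    have h2 := rayleigh hM (fun _ => (1:ℝ)) hx2ge
    rw [h1] at h2
    have h3 : (fun _ => (1:ℝ)) ⬝ᵥ (fun _ : Fin m => (1:ℝ)) = (m : ℝ) := by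
      simp [dotProduct]
    rw [h3] at h2
    have hcs : s ^ 2 ≤ (n : ℝ) * ∑ j, (∑ i, A i j) ^ 2 := by
      have hcs0 := sq_sum_le_card_mul_sum_sq (s := (Finset.univ : Finset (Fin n)))
        (f := fun j => ∑ i : Fin m, A i j)
      simp only [Finset.card_univ, Fintype.card_fin] at hcs0
      have hseq : s = ∑ j, ∑ i : Fin m, A i j := by rw [hs, Finset.sum_comm]
      rw [hseq]
      exact_mod_cast hcs0
    nlinarith [Finset.sum_nonneg (fun j (_ : j ∈ (Finset.univ : Finset (Fin n))) =>
      sq_nonneg (∑ i, A i j)), Nat.cast_nonneg (α := ℝ) n]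
    -- x * sqrt(mn) >= s
  have hmn0 : (0:ℝ) ≤ (m:ℝ) * n := by positivity
  set M0 : ℝ := Real.sqrt ((m:ℝ) * n) with hM0def
  have hM0sq : M0 ^ 2 = (m:ℝ) * n := Real.sq_sqrt hmn0
  have hM0nn : 0 ≤ M0 := Real.sqrt_nonneg _
  have hsxM0 : s ≤ x * M0 := by
    have h4 : s ^ 2 ≤ (x * M0) ^ 2 := by rw [mul_pow, hM0sq]; nlinarith [hray]
    calc s = Real.sqrt (s ^ 2) := (Real.sqrt_sq hs0).symm
      _ ≤ Real.sqrt ((x * M0) ^ 2) := Real.sqrt_le_sqrt h4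
      _ = x * M0 := Real.sqrt_sq (mul_nonneg hx0 hM0nn)
  -- Ky Fan split
  set S : Finset (Fin m) := Finset.univ.filter (fun i => (i : ℕ) < k) with hS
  have hkf : kyFanR A k = ∑ i ∈ S, svalRSorted A i := by
    rw [kyFanR, hS, Finset.sum_filter]
  have hi0S : i0 ∈ S := by simp [hS, hi0]; omega
  set T : Finset (Fin m) := S.erase i0 with hT
  have hsplit : ∑ i ∈ S, svalRSorted A i = x + ∑ i ∈ T, svalRSorted A i :=
    (Finset.add_sum_erase S _ hi0S).symm
  have hScard : S.card ≤ k := by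
    have h5 : S.card ≤ (Finset.range k).card :=
      Finset.card_le_card_of_injOn (fun i => (i : ℕ))
        (fun i hi => by simp [hS] at hi ⊢; exact hi)
        (fun a _ b _ h => Fin.val_injective h)
    simpa using h5
  have hk1R : (1:ℝ) ≤ (k:ℝ) := by exact_mod_cast hk
  have hTcard : (T.card : ℝ) ≤ (k : ℝ) - 1 := by
    have h5 : T.card ≤ k - 1 := by
      rw [hT, Finset.card_erase_of_mem hi0S]; omega
    calc (T.card : ℝ) ≤ ((k - 1 : ℕ) : ℝ) := by exact_mod_cast h5
      _ = (k : ℝ) - 1 := by rw [Nat.cast_sub hk, Nat.cast_one]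
  have hTsq : ∑ i ∈ T, svalRSorted A i ^ 2 ≤ s - x ^ 2 := by
    have hsub : T ⊆ Finset.univ.erase i0 := by
      intro a ha
      rw [hT, Finset.mem_erase] at ha
      exact Finset.mem_erase.mpr ⟨ha.1, Finset.mem_univ a⟩
    have h6 : ∑ i ∈ T, svalRSorted A i ^ 2 ≤ ∑ i ∈ Finset.univ.erase i0, svalRSorted A i ^ 2 :=
      Finset.sum_le_sum_of_subset_of_nonneg hsub (fun i _ _ => sq_nonneg _)
    have h7 : x ^ 2 + ∑ i ∈ Finset.univ.erase i0, svalRSorted A i ^ 2 = s := by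
      rw [← hsumsq]
      exact Finset.add_sum_erase Finset.univ (fun i => svalRSorted A i ^ 2) (Finset.mem_univ i0)
    linarith
  set a : ℝ := Real.sqrt ((k:ℝ) - 1) with hadef
  set b : ℝ := Real.sqrt (s - x ^ 2) with hbdef
  have ha2 : a ^ 2 = (k:ℝ) - 1 := Real.sq_sqrt (by linarith)
  have hb2 : b ^ 2 = s - x ^ 2 := Real.sq_sqrt (by linarith)
  have hann : 0 ≤ a := Real.sqrt_nonneg _
  have hbnn : 0 ≤ b := Real.sqrt_nonneg _
  have hTle : ∑ i ∈ T, svalRSorted A i ≤ a * b := by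
    have hcs2 := sq_sum_le_card_mul_sum_sq (s := T) (f := fun i => svalRSorted A i)
    have hTnn : 0 ≤ ∑ i ∈ T, svalRSorted A i := Finset.sum_nonneg fun i _ => hnn i
    have h8 : (∑ i ∈ T, svalRSorted A i) ^ 2 ≤ (a * b) ^ 2 := by
      rw [mul_pow, ha2, hb2]
      calc (∑ i ∈ T, svalRSorted A i) ^ 2 ≤ (T.card : ℝ) * ∑ i ∈ T, svalRSorted A i ^ 2 := by
            exact_mod_cast hcs2
        _ ≤ ((k:ℝ) - 1) * (s - x ^ 2) := by
            apply mul_le_mul hTcard hTsq (Finset.sum_nonneg fun i _ => sq_nonneg _) (by linarith)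
    calc ∑ i ∈ T, svalRSorted A i = Real.sqrt ((∑ i ∈ T, svalRSorted A i) ^ 2) :=
          (Real.sqrt_sq hTnn).symm
      _ ≤ Real.sqrt ((a * b) ^ 2) := Real.sqrt_le_sqrt h8
      _ = a * b := Real.sqrt_sq (mul_nonneg hann hbnn)
  -- final algebra
  set K : ℝ := Real.sqrt (k : ℝ) with hKdef
  have hK2 : K ^ 2 = (k : ℝ) := Real.sq_sqrt (Nat.cast_nonneg k)
  have hKnn : 0 ≤ K := Real.sqrt_nonneg _
  have hK1 : 1 ≤ K := by
    rw [hKdef, show (1:ℝ) = Real.sqrt 1 by simp]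
    exact Real.sqrt_le_sqrt hk1R
  have hxM0 : x ≤ M0 := by
    have h9 : x ^ 2 ≤ M0 ^ 2 := by rw [hM0sq]; linarith
    calc x = Real.sqrt (x ^ 2) := (Real.sqrt_sq hx0).symm
      _ ≤ Real.sqrt (M0 ^ 2) := Real.sqrt_le_sqrt h9
      _ = M0 := Real.sqrt_sq hM0nn
  have hrhs : 0 ≤ (1 + K) * M0 - 2 * x := by nlinarith
  have hab2 : (a * b) ^ 2 = (K ^ 2 - 1) * (s - x ^ 2) := by
    rw [mul_pow, ha2, hb2, hK2]
  have hK21 : 0 ≤ K ^ 2 - 1 := by rw [hK2]; linarith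
  have hxMs : 0 ≤ x * M0 - s := by linarith
  have hsq2 : (2 * (a * b)) ^ 2 ≤ ((1 + K) * M0 - 2 * x) ^ 2 := by
    have hz : (K ^ 2 - 1) * (s - x ^ 2) - (a * b) ^ 2 = 0 := by rw [hab2]; ring
    have key : ((1 + K) * M0 - 2 * x) ^ 2 - (2 * (a * b)) ^ 2 =
        ((1 + K) * M0 - 2 * K * x) ^ 2 + 4 * ((K ^ 2 - 1) * (x * M0 - s)) +
        4 * ((K ^ 2 - 1) * (s - x ^ 2) - (a * b) ^ 2) := by ring
    linarith [sq_nonneg ((1 + K) * M0 - 2 * K * x), mul_nonneg hK21 hxMs]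
  have habnn : 0 ≤ 2 * (a * b) := by positivity
  have hfin : 2 * (a * b) ≤ (1 + K) * M0 - 2 * x := by
    calc 2 * (a * b) = Real.sqrt ((2 * (a * b)) ^ 2) := (Real.sqrt_sq habnn).symm
      _ ≤ Real.sqrt (((1 + K) * M0 - 2 * x) ^ 2) := Real.sqrt_le_sqrt hsq2
      _ = (1 + K) * M0 - 2 * x := Real.sqrt_sq hrhs
  rw [hkf, hsplit]
  linarith
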